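/- (Griesmer computation in Theorem 4.1) Let p be an odd prime, m ≥ 3, 1 ≤ r ≤ p−1. Then Σ_{i=0}^{2m−1} ⌈(2p^{m−1}(p−1)(p^m − r − 1) + 1)/p^i⌉ ≥ 2p^m(p^m − r − 1) + 1. Consequently no [2p^m(p^m−r−1), 2m, 2p^{m−1}(p−1)(p^m−r−1)+1] linear code over F_p exists, so a code with parameters [2p^m(p^m−r−1), 2m, 2p^{m−1}(p−1)(p^m−r−1)] is distance optimal. -/

import Mathlib

open Finset

lemma my_ceilDiv_le (a b c : ℕ) (hb : 0 < b) (h : a ≤ b * c) : a ⌈/⌉ b ≤ c :=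
  (ceilDiv_le_iff_le_mul hb).2 h

lemma my_le_ceilDiv (a b c : ℕ) (hb : 0 < b) (h : b * c < a) : c + 1 ≤ a ⌈/⌉ b := by
  by_contra hcon
  push_neg at hcon
  have := (ceilDiv_le_iff_le_mul hb).1 (Nat.lt_succ_iff.mp hcon)
  omega

lemma my_le_mul_ceilDiv (a b : ℕ) (hb : 0 < b) : a ≤ b * (a ⌈/⌉ b) := by
  simpa [smul_eq_mul] using le_smul_ceilDiv (b := a) hb

lemma my_ceilDiv_ceilDiv (a b c : ℕ) (hb : 0 < b) (hc : 0 < c) :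
    a ⌈/⌉ b ⌈/⌉ c = a ⌈/⌉ (b * c) := by
  apply le_antisymm
  · rw [ceilDiv_le_iff_le_mul hc, ceilDiv_le_iff_le_mul hb, ← mul_assoc]
    exact my_le_mul_ceilDiv a (b*c) (Nat.mul_pos hb hc)
  · rw [ceilDiv_le_iff_le_mul (Nat.mul_pos hb hc), mul_assoc]
    calc a ≤ b * (a ⌈/⌉ b) := my_le_mul_ceilDiv a b hb
    _ ≤ b * (c * (a ⌈/⌉ b ⌈/⌉ c)) := Nat.mul_le_mul_left _ (my_le_mul_ceilDiv _ c hc)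

lemma my_ceilDiv_mono (a a' b : ℕ) (hb : 0 < b) (h : a ≤ a') : a ⌈/⌉ b ≤ a' ⌈/⌉ b := by
  rw [ceilDiv_le_iff_le_mul hb]
  exact h.trans (my_le_mul_ceilDiv a' b hb)

lemma my_ceilDiv_cast (a b : ℕ) (hb : 0 < b) :
    ((a ⌈/⌉ b : ℕ) : ℤ) = ⌈(a : ℚ) / (b : ℚ)⌉ := by
  have hbq : (0:ℚ) < b := by exact_mod_cast hb
  apply le_antisymm
  · set z := ⌈(a : ℚ) / (b : ℚ)⌉ with hz
    have hz0 : 0 ≤ z := Int.ceil_nonneg (by positivity)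
    have h1 : (a:ℚ)/b ≤ (z:ℚ) := Int.le_ceil _
    rw [div_le_iff₀ hbq] at h1
    have h2 : a ≤ b * z.toNat := by
      have hzt : ((z.toNat : ℤ) : ℚ) = (z:ℚ) := by rw [Int.toNat_of_nonneg hz0]
      have : (a:ℚ) ≤ ((b * z.toNat : ℕ) : ℚ) := by
        push_cast
        push_cast at hzt
        rw [hzt]
        linarith [h1]
      exact_mod_cast this
    have := my_ceilDiv_le a b z.toNat hb h2
    omega
  · rw [Int.ceil_le]
    rw [div_le_iff₀ hbq]
    have := my_le_mul_ceilDiv a b hb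
    push_cast
    exact_mod_cast by linarith [(by exact_mod_cast this : (a:ℚ) ≤ (b:ℚ) * (a ⌈/⌉ b : ℕ))]

lemma griesmer_aux (F : Type) [Field F] [Fintype F] [DecidableEq F] :
    ∀ (k : ℕ) (ι : Type) [Fintype ι] [DecidableEq ι] (C : Submodule F (ι → F)) (d : ℕ),
      0 < d → k ≤ Module.finrank F C →
      (∀ x ∈ C, x ≠ 0 → d ≤ hammingNorm x) →
      ∑ i ∈ Finset.range k, d ⌈/⌉ (Fintype.card F) ^ i ≤ Fintype.card ι := by
  intro k
  induction k with
  | zero => intro ι _ _ C d hd hk hmin; simp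
  | succ k ih =>
    intro ι _ _ C d hd hk hmin
    set q := Fintype.card F with hqdef
    have hq : 1 < q := Fintype.one_lt_card
    have hexists : ∃ x, x ∈ C ∧ x ≠ 0 := by
      by_contra hcon
      push_neg at hcon
      have hbot : C = ⊥ := (Submodule.eq_bot_iff C).mpr hcon
      rw [hbot, finrank_bot] at hk
      omega
    set W : Set ℕ := {w | ∃ x, x ∈ C ∧ x ≠ 0 ∧ hammingNorm x = w} with hW
    have hWne : W.Nonempty := by
      obtain ⟨x, hx, hx0⟩ := hexists
      exact ⟨hammingNorm x, x, hx, hx0, rfl⟩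
    set w := sInf W with hwdef
    obtain ⟨c, hcC, hc0, hcw⟩ : ∃ x, x ∈ C ∧ x ≠ 0 ∧ hammingNorm x = w := Nat.sInf_mem hWne
    have hwmin : ∀ x, x ∈ C → x ≠ 0 → w ≤ hammingNorm x := fun x hx hx0 =>
      Nat.sInf_le ⟨x, hx, hx0, rfl⟩
    have hdw : d ≤ w := hcw ▸ hmin c hcC hc0
    have hw0 : 0 < w := lt_of_lt_of_le hd hdw
    set S : Finset ι := {i | c i ≠ 0} with hSdef
    have hScard : S.card = w := hcw
    -- length bound for w
    have hwn : w ≤ Fintype.card ι := hScard ▸ Finset.card_le_univ S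
    -- the residual code
    set res : (ι → F) →ₗ[F] ({i : ι // c i = 0} → F) :=
      LinearMap.funLeft F F (fun i => i.val) with hres
    set f : C →ₗ[F] ({i : ι // c i = 0} → F) := res.comp C.subtype with hf
    set C' := LinearMap.range f with hC'
    have hcard' : Fintype.card {i : ι // c i = 0} + w = Fintype.card ι := by
      rw [Fintype.card_subtype, ← hScard, hSdef]
      have := Finset.card_filter_add_card_filter_not (s := (univ : Finset ι))
        (p := fun i => c i = 0)
      simpa using this
    -- kernel bound
    have hker : LinearMap.ker f ≤ Submodule.comap C.subtype (Submodule.span F {c}) := by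
      rintro ⟨x, hx⟩ hxker
      simp only [LinearMap.mem_ker, hf, LinearMap.comp_apply, Submodule.coe_subtype] at hxker
      have hxz : ∀ i : ι, c i = 0 → x i = 0 := by
        intro i hi
        have := congrFun hxker ⟨i, hi⟩
        simpa [hres, LinearMap.funLeft] using this
      simp only [Submodule.mem_comap, Submodule.coe_subtype]
      by_cases hx0 : x = 0
      · simp [hx0]
      · obtain ⟨j, hj⟩ : ∃ j, x j ≠ 0 := by
          by_contra hcon; push_neg at hcon; exact hx0 (funext hcon)
        have hcj : c j ≠ 0 := fun h => hj (hxz j h)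
        set lam := x j * (c j)⁻¹ with hlam
        set z := x - lam • c with hz
        have hzC : z ∈ C := Submodule.sub_mem _ hx (Submodule.smul_mem _ _ hcC)
        have hzj : z j = 0 := by
          simp only [hz, hlam, Pi.sub_apply, Pi.smul_apply, smul_eq_mul]
          field_simp
          simp
        have hzsupp : ∀ i, c i = 0 → z i = 0 := by
          intro i hi
          simp [hz, Pi.sub_apply, Pi.smul_apply, hi, hxz i hi]
        have hz0 : z = 0 := by
          by_contra hzz
          have h1 : w ≤ hammingNorm z := hwmin z hzC hzz
          have h2 : hammingNorm z < w := by
            rw [← hScard]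
            apply Finset.card_lt_card
            constructor
            · intro i hi
              simp only [hammingNorm, mem_filter, mem_univ, true_and] at hi
              simp only [hSdef, mem_filter, mem_univ, true_and]
              exact fun h => hi (hzsupp i h)
            · intro hsub
              have := hsub (by simp [hSdef, hcj] : j ∈ S)
              simp only [hammingNorm, mem_filter, mem_univ, true_and] at this
              exact this hzj
          omega
        have hxc : x = lam • c := by
          have := sub_eq_zero.mp hz0
          exact this
        exact Submodule.mem_span_singleton.mpr ⟨lam, hxc.symm⟩
    have hkerrank : Module.finrank F (LinearMap.ker f) ≤ 1 := by
      have hle : Submodule.span F {c} ≤ C := Submodule.span_le.mpr (by simpa using hcC)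
      have h1 : Module.finrank F (LinearMap.ker f) ≤
          Module.finrank F (Submodule.comap C.subtype (Submodule.span F {c})) :=
        Submodule.finrank_mono hker
      have h2 : Module.finrank F (Submodule.comap C.subtype (Submodule.span F {c})) =
          Module.finrank F (Submodule.span F {c}) :=
        LinearEquiv.finrank_eq (Submodule.comapSubtypeEquivOfLe hle)
      rw [h2, finrank_span_singleton hc0] at h1
      exact h1
    have hrank' : k ≤ Module.finrank F C' := by
      have h1 := LinearMap.finrank_range_add_finrank_ker f
      have h2 : Module.finrank F C' = Module.finrank F (LinearMap.range f) := rfl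
      omega
    have hcd0 : 0 < w ⌈/⌉ q := by
      by_contra hh
      push_neg at hh
      have hh0 : w ⌈/⌉ q = 0 := Nat.le_zero.mp hh
      have := my_le_mul_ceilDiv w q (by omega)
      rw [hh0, Nat.mul_zero] at this
      omega
    -- minimum distance of the residual code
    have hmin' : ∀ y ∈ C', y ≠ 0 → w ⌈/⌉ q ≤ hammingNorm y := by
      rintro y hy hy0
      obtain ⟨⟨x, hx⟩, hfx⟩ := hy
      -- pigeonhole
      have hsum : ∑ lam ∈ (univ : Finset F), #{i ∈ S | x i * (c i)⁻¹ = lam} = w := by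
        rw [← hScard]
        exact (Finset.card_eq_sum_card_fiberwise (fun i _ => mem_univ _)).symm
      obtain ⟨lam, hlam⟩ : ∃ lam : F, w ⌈/⌉ q ≤ #{i ∈ S | x i * (c i)⁻¹ = lam} := by
        by_contra hcon
        push_neg at hcon
        have hbound : ∀ lam ∈ (univ : Finset F), #{i ∈ S | x i * (c i)⁻¹ = lam} ≤ w ⌈/⌉ q - 1 := by
          intro lam _
          have := hcon lam
          omega
        have hsumle := Finset.sum_le_card_nsmul _ _ _ hbound
        rw [hsum] at hsumle
        rw [smul_eq_mul, Finset.card_univ, ← hqdef] at hsumle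
        have := my_ceilDiv_le w q (w ⌈/⌉ q - 1) (by omega) hsumle
        omega
      set A : Finset ι := {i ∈ S | x i * (c i)⁻¹ = lam} with hA
      have hAS : A ⊆ S := Finset.filter_subset _ _
      set z := x - lam • c with hz
      have hzC : z ∈ C := Submodule.sub_mem _ hx (Submodule.smul_mem _ _ hcC)
      have hzne : z ≠ 0 := by
        intro hz0
        have hxc : x = lam • c := sub_eq_zero.mp hz0
        apply hy0
        rw [← hfx]
        funext i
        simp [hf, hres, LinearMap.funLeft, hxc, i.prop]
      have h1 : w ≤ hammingNorm z := hwmin z hzC hzne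
      -- hammingNorm y counts nonzero positions of x outside S
      have hynorm : hammingNorm y = #{i ∈ univ \ S | x i ≠ 0} := by
        rw [← hfx]
        simp only [hammingNorm]
        apply Finset.card_bij (fun (i : {i : ι // c i = 0}) _ => i.val)
        · rintro ⟨i, hi⟩ hmem
          simp only [mem_filter, mem_univ, true_and, mem_sdiff, hSdef] at hmem ⊢
          constructor
          · simp [hi]
          · simpa [hf, hres, LinearMap.funLeft] using hmem
        · rintro ⟨i1, h1'⟩ hm1 ⟨i2, h2'⟩ hm2 heq
          simpa using heq
        · intro i hi
          simp only [mem_sdiff, mem_filter, mem_univ, true_and, hSdef, not_not] at hi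
          refine ⟨⟨i, hi.1⟩, ?_, rfl⟩
          simp only [mem_filter, mem_univ, true_and]
          simpa [hf, hres, LinearMap.funLeft] using hi.2
      -- support of z is inside (S \ A) ∪ (univ \ S ∩ supp x)
      have hsubset : ({i | z i ≠ 0} : Finset ι) ⊆ (S \ A) ∪ {i ∈ univ \ S | x i ≠ 0} := by
        intro i hi
        simp only [mem_filter, mem_univ, true_and] at hi
        by_cases hiS : i ∈ S
        · simp only [mem_union, mem_sdiff]
          left
          refine ⟨hiS, ?_⟩
          intro hiA
          simp only [hA, mem_filter] at hiA
          apply hi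
          have hci : c i ≠ 0 := by simpa [hSdef] using hiS
          have : x i = lam * c i := by
            field_simp at hiA
            rw [hiA.2, mul_comm]
          simp [hz, this, smul_eq_mul]
        · simp only [mem_union, mem_sdiff, mem_filter, mem_univ, true_and]
          right
          have hci : c i = 0 := by simpa [hSdef, not_not] using hiS
          refine ⟨hiS, ?_⟩
          intro hxi
          apply hi
          simp [hz, hxi, hci]
      have h2 : hammingNorm z ≤ (w - A.card) + hammingNorm y := by
        calc hammingNorm z ≤ ((S \ A) ∪ {i ∈ univ \ S | x i ≠ 0}).card :=
              Finset.card_le_card hsubset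
        _ ≤ (S \ A).card + #{i ∈ univ \ S | x i ≠ 0} := Finset.card_union_le _ _
        _ = (w - A.card) + hammingNorm y := by rw [Finset.card_sdiff_of_subset hAS, hScard, hynorm]
      have hAw : A.card ≤ w := hScard ▸ Finset.card_le_card hAS
      omega
    -- apply IH
    have hih := ih {i : ι // c i = 0} C' (w ⌈/⌉ q) hcd0 hrank' hmin'
    -- assemble
    have hstep : ∀ i, d ⌈/⌉ q ^ (i + 1) ≤ (w ⌈/⌉ q) ⌈/⌉ q ^ i := by
      intro i
      rw [my_ceilDiv_ceilDiv w q (q^i) (by omega) (pow_pos (by omega) i), ← pow_succ']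
      exact my_ceilDiv_mono d w (q^(i+1)) (pow_pos (by omega) _) hdw
    calc ∑ i ∈ Finset.range (k+1), d ⌈/⌉ q ^ i
        = (∑ i ∈ Finset.range k, d ⌈/⌉ q ^ (i+1)) + d ⌈/⌉ q ^ 0 := Finset.sum_range_succ' _ _
      _ ≤ (∑ i ∈ Finset.range k, (w ⌈/⌉ q) ⌈/⌉ q ^ i) + d := by
          gcongr with i hi
          · exact hstep i
          · simp
      _ ≤ Fintype.card {i : ι // c i = 0} + w := by
          have : d ≤ w := hdw
          omega
      _ = Fintype.card ι := hcard'

/-- Griesmer computation in Theorem 4.1: For `p` an odd prime,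
`m ≥ 3`, `1 ≤ r ≤ p-1`:
`Σ_{i=0}^{2m-1} ⌈(2p^{m-1}(p-1)(p^m-r-1)+1)/p^i⌉ ≥ 2p^m(p^m-r-1)+1`, and
consequently no linear `[2p^m(p^m-r-1), 2m]` code over `F_p` with minimum
distance `≥ 2p^{m-1}(p-1)(p^m-r-1)+1` exists. -/
theorem griesmer_distance_optimal (p m r : ℕ) [Fact p.Prime] (hp : Odd p)
    (hm : 3 ≤ m) (hr : 1 ≤ r) (hr' : r ≤ p - 1) :
    ((2 * p ^ m * (p ^ m - r - 1) + 1 : ℕ) : ℤ) ≤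
      ∑ i ∈ Finset.range (2 * m),
        ⌈((2 * p ^ (m - 1) * (p - 1) * (p ^ m - r - 1) + 1 : ℕ) : ℚ) / (p : ℚ) ^ i⌉ ∧
    ¬ ∃ C : Submodule (ZMod p) (Fin (2 * p ^ m * (p ^ m - r - 1)) → ZMod p),
        Module.finrank (ZMod p) C = 2 * m ∧
        ∀ x ∈ C, x ≠ 0 →
          2 * p ^ (m - 1) * (p - 1) * (p ^ m - r - 1) + 1 ≤ hammingNorm x := by
  have hprime : p.Prime := Fact.out
  have hp2 : 2 ≤ p := hprime.two_le
  have hp3 : 3 ≤ p := by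
    rcases Nat.lt_or_ge p 3 with h | h
    · interval_cases p
      · exact absurd hp (by decide)
    · exact h
  obtain ⟨m', rfl⟩ : ∃ m', m = m' + 3 := ⟨m - 3, by omega⟩
  set D : ℕ := 2 * p ^ (m' + 3 - 1) * (p - 1) * (p ^ (m' + 3) - r - 1) + 1 with hDdef
  have hrp : r + 1 ≤ p := by omega
  have hppow : p ≤ p ^ (m' + 3) := Nat.le_self_pow (by omega) p
  have hrpm : r + 2 ≤ p ^ (m' + 3) := by
    have h2 : p ^ 2 ≤ p ^ (m' + 3) := Nat.pow_le_pow_right (by omega) (by omega)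
    have h3 : p + 1 ≤ p ^ 2 := by nlinarith [hp3]
    omega
  have hP3 : (3 : ℤ) ≤ (p : ℤ) := by exact_mod_cast hp3
  have hR1 : (1 : ℤ) ≤ (r : ℤ) := by exact_mod_cast hr
  have hRP : (r : ℤ) + 1 ≤ (p : ℤ) := by exact_mod_cast hrp
  have hcastN : ((p ^ (m' + 3) - r - 1 : ℕ) : ℤ) = (p : ℤ) ^ (m' + 3) - r - 1 := by
    rw [Nat.cast_sub (by omega : 1 ≤ p ^ (m' + 3) - r), Nat.cast_sub (by omega : r ≤ p ^ (m' + 3))]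
    push_cast
    ring
  have hNZ1 : (1 : ℤ) ≤ (p : ℤ) ^ (m' + 3) - r - 1 := by
    have h := (Nat.cast_le (α := ℤ)).mpr hrpm
    push_cast at h
    linarith
  have hcastD : (D : ℤ) = 2 * (p : ℤ) ^ (m' + 2) * ((p : ℤ) - 1) * ((p : ℤ) ^ (m' + 3) - r - 1) + 1 := by
    rw [hDdef]
    push_cast [hcastN, Nat.cast_sub (show 1 ≤ p by omega)]
    ring
  have hcastn : ((2 * p ^ (m' + 3) * (p ^ (m' + 3) - r - 1) + 1 : ℕ) : ℤ)
      = 2 * (p : ℤ) ^ (m' + 3) * ((p : ℤ) ^ (m' + 3) - r - 1) + 1 := by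
    push_cast [hcastN]
    ring
  set L : ℕ → ℤ := fun i =>
    if i < m' + 3 then 2 * ((p : ℤ) - 1) * ((p : ℤ) ^ (m' + 3) - r - 1) * (p : ℤ) ^ (m' + 2 - i) + 1
    else if i = m' + 3 then 2 * (p : ℤ) ^ (m' + 2) * ((p : ℤ) - 1) - 2 * r - 1
    else if i = m' + 4 then 2 * (p : ℤ) ^ (m' + 1) * ((p : ℤ) - 1) - 1
    else 2 * ((p : ℤ) - 1) * (p : ℤ) ^ (2 * (m' + 3) - 1 - i) with hLdef
  have hkey : ∀ (z : ℤ) (i : ℕ), (z - 1) * (p : ℤ) ^ i < (D : ℤ) →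
      z ≤ ⌈(D : ℚ) / (p : ℚ) ^ i⌉ := by
    intro z i h
    have hppos : (0 : ℚ) < (p : ℚ) ^ i := by positivity
    have h2 : ((z - 1 : ℤ) : ℚ) < (D : ℚ) / (p : ℚ) ^ i := by
      rw [lt_div_iff₀ hppos]
      exact_mod_cast h
    have := Int.lt_ceil.mpr h2
    omega
  have hbound : ∀ i ∈ Finset.range (2 * (m' + 3)), L i ≤ ⌈(D : ℚ) / (p : ℚ) ^ i⌉ := by
    intro i hi
    rw [Finset.mem_range] at hi
    rcases Nat.lt_or_ge i (m' + 3) with h1 | h1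
    · have hLi : L i = 2 * ((p : ℤ) - 1) * ((p : ℤ) ^ (m' + 3) - r - 1) * (p : ℤ) ^ (m' + 2 - i) + 1 := by
        simp only [hLdef]
        rw [if_pos h1]
      rw [hLi]
      apply hkey
      have hpow : (p : ℤ) ^ (m' + 2 - i) * (p : ℤ) ^ i = (p : ℤ) ^ (m' + 2) := by
        rw [← pow_add]
        congr 1
        omega
      rw [hcastD]
      have e : (2 * ((p : ℤ) - 1) * ((p : ℤ) ^ (m' + 3) - r - 1) * (p : ℤ) ^ (m' + 2 - i) + 1 - 1)
            * (p : ℤ) ^ i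
          = 2 * (p : ℤ) ^ (m' + 2) * ((p : ℤ) - 1) * ((p : ℤ) ^ (m' + 3) - r - 1) := by
        rw [add_sub_cancel_right, mul_assoc, hpow]
        ring
      rw [e]
      linarith
    · rcases Nat.eq_or_lt_of_le h1 with h2 | h2
      · have hLi : L i = 2 * (p : ℤ) ^ (m' + 2) * ((p : ℤ) - 1) - 2 * r - 1 := by
          simp only [hLdef]
          rw [if_neg (show ¬ i < m' + 3 by omega), if_pos h2.symm]
        rw [hLi]
        apply hkey
        rw [hcastD, ← h2]
        have E : 2 * (p : ℤ) ^ (m' + 2) * ((p : ℤ) - 1) * ((p : ℤ) ^ (m' + 3) - r - 1) + 1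
            - (2 * (p : ℤ) ^ (m' + 2) * ((p : ℤ) - 1) - 2 * r - 1 - 1) * (p : ℤ) ^ (m' + 3)
            = 2 * ((r : ℤ) + 1) * (p : ℤ) ^ (m' + 2) + 1 := by ring
        have hpos : (0 : ℤ) < 2 * ((r : ℤ) + 1) * (p : ℤ) ^ (m' + 2) + 1 := by positivity
        linarith
      · rcases Nat.eq_or_lt_of_le h2 with h3 | h3
        · have hi4 : i = m' + 4 := by omega
          have hLi : L i = 2 * (p : ℤ) ^ (m' + 1) * ((p : ℤ) - 1) - 1 := by
            simp only [hLdef]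
            rw [if_neg (show ¬ i < m' + 3 by omega), if_neg (show ¬ i = m' + 3 by omega),
              if_pos hi4]
          rw [hLi]
          apply hkey
          rw [hcastD, hi4]
          have E : 2 * (p : ℤ) ^ (m' + 2) * ((p : ℤ) - 1) * ((p : ℤ) ^ (m' + 3) - r - 1) + 1
              - (2 * (p : ℤ) ^ (m' + 1) * ((p : ℤ) - 1) - 1 - 1) * (p : ℤ) ^ (m' + 4)
              = 2 * (p : ℤ) ^ (m' + 1) * (p : ℤ)
                * ((p : ℤ) ^ 2 - ((p : ℤ) - 1) * ((r : ℤ) + 1)) + 1 := by ring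
          have h4 : ((p : ℤ) - 1) * ((r : ℤ) + 1) ≤ ((p : ℤ) - 1) * (p : ℤ) := by
            have h0 : (0 : ℤ) ≤ (p : ℤ) - 1 := by linarith
            exact mul_le_mul_of_nonneg_left hRP h0
          have h5 : (p : ℤ) ≤ (p : ℤ) ^ 2 - ((p : ℤ) - 1) * ((r : ℤ) + 1) := by
            nlinarith [h4]
          have h6 : (0 : ℤ) < 2 * (p : ℤ) ^ (m' + 1) * (p : ℤ) := by positivity
          have h7 : (0 : ℤ) <
              2 * (p : ℤ) ^ (m' + 1) * (p : ℤ) * ((p : ℤ) ^ 2 - ((p : ℤ) - 1) * ((r : ℤ) + 1)) :=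
            mul_pos h6 (by linarith)
          linarith
        · have hLi : L i = 2 * ((p : ℤ) - 1) * (p : ℤ) ^ (2 * (m' + 3) - 1 - i) := by
            simp only [hLdef]
            rw [if_neg (show ¬ i < m' + 3 by omega), if_neg (show ¬ i = m' + 3 by omega),
              if_neg (show ¬ i = m' + 4 by omega)]
          rw [hLi]
          apply hkey
          rw [hcastD]
          have hpow : (p : ℤ) ^ (2 * (m' + 3) - 1 - i) * (p : ℤ) ^ i
              = (p : ℤ) ^ (m' + 2) * (p : ℤ) ^ (m' + 3) := by
            rw [← pow_add, ← pow_add]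
            congr 1
            omega
          have E : (2 * ((p : ℤ) - 1) * (p : ℤ) ^ (2 * (m' + 3) - 1 - i) - 1) * (p : ℤ) ^ i
              = 2 * ((p : ℤ) - 1) * ((p : ℤ) ^ (m' + 2) * (p : ℤ) ^ (m' + 3)) - (p : ℤ) ^ i := by
            rw [← hpow]; ring
          rw [E]
          have c1 : 2 * (p : ℤ) ^ (m' + 2) * ((p : ℤ) - 1) * ((r : ℤ) + 1)
              ≤ 2 * (p : ℤ) ^ (m' + 2) * ((p : ℤ) - 1) * (p : ℤ) := by
            have h0 : (0 : ℤ) ≤ 2 * (p : ℤ) ^ (m' + 2) * ((p : ℤ) - 1) := by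
              have : (0 : ℤ) ≤ (p : ℤ) - 1 := by linarith
              positivity
            exact mul_le_mul_of_nonneg_left hRP h0
          have c2 : 2 * (p : ℤ) ^ (m' + 2) * ((p : ℤ) - 1) * (p : ℤ)
              ≤ 2 * (p : ℤ) ^ (m' + 2) * (p : ℤ) * (p : ℤ) := by
            have h0 : (0 : ℤ) ≤ 2 * (p : ℤ) ^ (m' + 2) * (p : ℤ) := by positivity
            have h := mul_le_mul_of_nonneg_left (show (p : ℤ) - 1 ≤ (p : ℤ) by linarith) h0
            linarith [h]
          have c3 : 2 * (p : ℤ) ^ (m' + 2) * (p : ℤ) * (p : ℤ) ≤ (p : ℤ) ^ (m' + 5) := by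
            have h0 : (0 : ℤ) ≤ (p : ℤ) ^ (m' + 2) * (p : ℤ) * (p : ℤ) := by positivity
            have h := mul_le_mul_of_nonneg_right (show (2 : ℤ) ≤ (p : ℤ) by linarith) h0
            have e5 : (p : ℤ) ^ (m' + 5) = (p : ℤ) ^ (m' + 2) * (p : ℤ) * (p : ℤ) * (p : ℤ) := by
              ring
            linarith [h]
          have c4 : (p : ℤ) ^ (m' + 5) ≤ (p : ℤ) ^ i := by
            apply pow_le_pow_right₀ (by linarith : (1 : ℤ) ≤ (p : ℤ)) (by omega)
          linarith [c1, c2, c3, c4]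
  -- sum of the lower bounds
  have hsumL : 2 * (p : ℤ) ^ (m' + 3) * ((p : ℤ) ^ (m' + 3) - r - 1) + 1 + (m' : ℤ) ≤
      ∑ i ∈ Finset.range (2 * (m' + 3)), L i := by
    have e1 : ∑ i ∈ Finset.range (2 * (m' + 3)), L i
        = ∑ i ∈ Finset.range (m' + 5), L i + ∑ i ∈ Finset.range (m' + 1), L (m' + 5 + i) := by
      rw [show 2 * (m' + 3) = (m' + 5) + (m' + 1) by ring, Finset.sum_range_add]
    have e2 : ∑ i ∈ Finset.range (m' + 5), L i
        = ∑ i ∈ Finset.range (m' + 4), L i + L (m' + 4) := by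
      rw [show m' + 5 = (m' + 4) + 1 by ring, Finset.sum_range_succ]
    have e3 : ∑ i ∈ Finset.range (m' + 4), L i
        = ∑ i ∈ Finset.range (m' + 3), L i + L (m' + 3) := by
      rw [show m' + 4 = (m' + 3) + 1 by ring, Finset.sum_range_succ]
    have hL3 : L (m' + 3) = 2 * (p : ℤ) ^ (m' + 2) * ((p : ℤ) - 1) - 2 * r - 1 := by
      simp only [hLdef]
      rw [if_neg (show ¬ m' + 3 < m' + 3 by omega)]
      simp
    have hL4 : L (m' + 4) = 2 * (p : ℤ) ^ (m' + 1) * ((p : ℤ) - 1) - 1 := by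
      simp only [hLdef]
      rw [if_neg (show ¬ m' + 4 < m' + 3 by omega), if_neg (show ¬ m' + 4 = m' + 3 by omega)]
      simp
    have hLbig : ∀ i ∈ Finset.range (m' + 1),
        L (m' + 5 + i) = 2 * ((p : ℤ) - 1) * (p : ℤ) ^ (m' - i) := by
      intro i hi
      have hi' := Finset.mem_range.mp hi
      simp only [hLdef]
      rw [if_neg (show ¬ m' + 5 + i < m' + 3 by omega),
        if_neg (show ¬ m' + 5 + i = m' + 3 by omega),
        if_neg (show ¬ m' + 5 + i = m' + 4 by omega)]
      have he : 2 * (m' + 3) - 1 - (m' + 5 + i) = m' - i := by omega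
      rw [he]
    have hbig2 : ∑ i ∈ Finset.range (m' + 1), L (m' + 5 + i)
        = 2 * ((p : ℤ) - 1) * ∑ i ∈ Finset.range (m' + 1), (p : ℤ) ^ i := by
      rw [Finset.sum_congr rfl hLbig, ← Finset.mul_sum]
      congr 1
      rw [← Finset.sum_range_reflect (fun j => (p : ℤ) ^ j) (m' + 1)]
      apply Finset.sum_congr rfl
      intro i hi
      have := Finset.mem_range.mp hi
      simp only [show m' + 1 - 1 - i = m' - i from by omega]
    have hfirst : ∑ i ∈ Finset.range (m' + 3), L i
        = 2 * ((p : ℤ) - 1) * ((p : ℤ) ^ (m' + 3) - r - 1)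
            * (∑ i ∈ Finset.range (m' + 3), (p : ℤ) ^ i) + ((m' : ℤ) + 3) := by
      have step1 : ∑ i ∈ Finset.range (m' + 3), L i
          = ∑ i ∈ Finset.range (m' + 3),
              (2 * ((p : ℤ) - 1) * ((p : ℤ) ^ (m' + 3) - r - 1) * (p : ℤ) ^ (m' + 2 - i) + 1) := by
        apply Finset.sum_congr rfl
        intro i hi
        simp only [hLdef]
        rw [if_pos (Finset.mem_range.mp hi)]
      rw [step1, Finset.sum_add_distrib, Finset.sum_const, Finset.card_range, ← Finset.mul_sum]
      have hrefl : ∑ i ∈ Finset.range (m' + 3), (p : ℤ) ^ (m' + 2 - i)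
          = ∑ i ∈ Finset.range (m' + 3), (p : ℤ) ^ i := by
        rw [← Finset.sum_range_reflect (fun j => (p : ℤ) ^ j) (m' + 3)]
        apply Finset.sum_congr rfl
        intro i hi
        have := Finset.mem_range.mp hi
        simp only [show m' + 3 - 1 - i = m' + 2 - i from by omega]
      rw [hrefl]
      ring
    have hGsplit : ∑ i ∈ Finset.range (m' + 3), (p : ℤ) ^ i
        = ∑ i ∈ Finset.range (m' + 1), (p : ℤ) ^ i + (p : ℤ) ^ (m' + 1) + (p : ℤ) ^ (m' + 2) := by
      rw [show m' + 3 = (m' + 2) + 1 by ring, Finset.sum_range_succ,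
        show m' + 2 = (m' + 1) + 1 by ring, Finset.sum_range_succ]
    have hgeom : (∑ i ∈ Finset.range (m' + 3), (p : ℤ) ^ i) * ((p : ℤ) - 1)
        = (p : ℤ) ^ (m' + 3) - 1 := geom_sum_mul (p : ℤ) (m' + 3)
    have htot : ∑ i ∈ Finset.range (2 * (m' + 3)), L i
        = 2 * (p : ℤ) ^ (m' + 3) * ((p : ℤ) ^ (m' + 3) - r - 1) + 1 + (m' : ℤ) := by
      rw [e1, e2, e3, hL3, hL4, hbig2, hfirst]
      linear_combination (2 * ((p : ℤ) ^ (m' + 3) - r - 1) + 2) * hgeom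
        - 2 * ((p : ℤ) - 1) * hGsplit
    rw [htot]
  have main1 : ((2 * p ^ (m' + 3) * (p ^ (m' + 3) - r - 1) + 1 : ℕ) : ℤ) ≤
      ∑ i ∈ Finset.range (2 * (m' + 3)), ⌈(D : ℚ) / (p : ℚ) ^ i⌉ := by
    rw [hcastn]
    have h0 : (0 : ℤ) ≤ (m' : ℤ) := by positivity
    calc 2 * (p : ℤ) ^ (m' + 3) * ((p : ℤ) ^ (m' + 3) - r - 1) + 1
        ≤ ∑ i ∈ Finset.range (2 * (m' + 3)), L i := by linarith
    _ ≤ _ := Finset.sum_le_sum hbound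
  refine ⟨main1, ?_⟩
  rintro ⟨C, hCrank, hCmin⟩
  have hcardF : Fintype.card (ZMod p) = p := ZMod.card p
  have hD0 : 0 < D := by omega
  have hgries := griesmer_aux (ZMod p) (2 * (m' + 3))
    (Fin (2 * p ^ (m' + 3) * (p ^ (m' + 3) - r - 1))) C D hD0 (le_of_eq hCrank.symm) hCmin
  rw [Fintype.card_fin, hcardF] at hgries
  have hconv : ∑ i ∈ Finset.range (2 * (m' + 3)), ((D ⌈/⌉ p ^ i : ℕ) : ℤ) =
      ∑ i ∈ Finset.range (2 * (m' + 3)), ⌈(D : ℚ) / (p : ℚ) ^ i⌉ := by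
    apply Finset.sum_congr rfl
    intro i _
    rw [my_ceilDiv_cast D (p ^ i) (pow_pos (by omega) i)]
    congr 1
    push_cast
    ring
  have hZ : ((∑ i ∈ Finset.range (2 * (m' + 3)), D ⌈/⌉ p ^ i : ℕ) : ℤ) ≤
      ((2 * p ^ (m' + 3) * (p ^ (m' + 3) - r - 1) : ℕ) : ℤ) := Nat.cast_le.mpr hgries
  rw [Nat.cast_sum, hconv] at hZ
  have hfin := le_trans main1 hZ
  have := (Nat.cast_le (α := ℤ)).mp hfin
  omega
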